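/- arXiv:1309.5508 — 6 statements merged into one kernel-verified Lean document; each statement's English description precedes it below -/
import Mathlib

section
/- Let f_i(x) = xᵀA_i x + a_iᵀx + ā_i and g_i(x) = xᵀB_i x + b_iᵀx + b̄_i with A_i, B_i symmetric and g_i > 0 on a set S. Then for all x, x* ∈ S, f_i(x)/g_i(x) - f_i(x*)/g_i(x*) = u_i(x,x*)·[∇(f_i/g_i)(x*)]ᵀ(x - x*) + s_i(x,x*), where u_i(x,x*) = g_i(x*)/g_i(x) and s_i(x,x*) = (1/g_i(x))·(x - x*)ᵀ[A_i - (f_i(x*)/g_i(x*))B_i](x - x*). -/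
open Matrix

set_option maxHeartbeats 2000000 in
theorem stmt_2 {n : ℕ} (A B : Matrix (Fin n) (Fin n) ℝ) (a b : Fin n → ℝ) (abar bbar : ℝ)
    (hA : A.IsSymm) (hB : B.IsSymm) (S : Set (Fin n → ℝ))
    (f : (Fin n → ℝ) → ℝ) (g : (Fin n → ℝ) → ℝ)
    (hf : ∀ x, f x = x ⬝ᵥ (A *ᵥ x) + a ⬝ᵥ x + abar)
    (hg : ∀ x, g x = x ⬝ᵥ (B *ᵥ x) + b ⬝ᵥ x + bbar)
    (hgpos : ∀ x ∈ S, 0 < g x) :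
    ∀ x ∈ S, ∀ xs ∈ S,
      f x / g x - f xs / g xs
        = (g xs / g x) *
            ((((g xs) ^ 2)⁻¹ •
              ((g xs) • ((2 : ℝ) • (A *ᵥ xs) + a) - (f xs) • ((2 : ℝ) • (B *ᵥ xs) + b))) ⬝ᵥ (x - xs))
          + (1 / g x) * ((x - xs) ⬝ᵥ ((A - (f xs / g xs) • B) *ᵥ (x - xs))) := by
  intro x hx xs hxs
  have hgx : g x ≠ 0 := ne_of_gt (hgpos x hx)
  have hgxs : g xs ≠ 0 := ne_of_gt (hgpos xs hxs)
  have hfx := hf x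
  have hfxs := hf xs
  have hgx' := hg x
  have hgxs' := hg xs
  simp only [mulVec_sub, sub_mulVec, smul_mulVec, dotProduct_sub, sub_dotProduct,
    dotProduct_add, add_dotProduct, dotProduct_smul, smul_dotProduct, smul_eq_mul,
    smul_sub, smul_add]
  rw [show xs ⬝ᵥ A *ᵥ x = x ⬝ᵥ A *ᵥ xs by
        rw [dotProduct_mulVec, ← mulVec_transpose, hA.eq, dotProduct_comm],
      show xs ⬝ᵥ B *ᵥ x = x ⬝ᵥ B *ᵥ xs by
        rw [dotProduct_mulVec, ← mulVec_transpose, hB.eq, dotProduct_comm],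
      dotProduct_comm (A *ᵥ xs) x, dotProduct_comm (B *ᵥ xs) x,
      dotProduct_comm (A *ᵥ xs) xs, dotProduct_comm (B *ᵥ xs) xs]
  rw [show x ⬝ᵥ A *ᵥ xs = xs ⬝ᵥ A *ᵥ x by
        rw [dotProduct_mulVec, ← mulVec_transpose, hA.eq, dotProduct_comm]] at *
  rw [show x ⬝ᵥ B *ᵥ xs = xs ⬝ᵥ B *ᵥ x by
        rw [dotProduct_mulVec, ← mulVec_transpose, hB.eq, dotProduct_comm]] at *
  rw [hfx, hfxs, hgx', hgxs']
  rw [hgx'] at hgx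
  rw [hgxs'] at hgxs
  set p1 := x ⬝ᵥ A *ᵥ x
  set p2 := xs ⬝ᵥ A *ᵥ x
  set p3 := xs ⬝ᵥ A *ᵥ xs
  set q1 := x ⬝ᵥ B *ᵥ x
  set q2 := xs ⬝ᵥ B *ᵥ x
  set q3 := xs ⬝ᵥ B *ᵥ xs
  set r1 := a ⬝ᵥ x
  set r2 := a ⬝ᵥ xs
  set s1 := b ⬝ᵥ x
  set s2 := b ⬝ᵥ xs
  field_simp
  ring
end

section
/- Let x* be feasible for the vector quadratic fractional problem (VQFP) with each constraint h_j convex and differentiable. Suppose there exist τ ∈ ℝᵐ with τ > 0 componentwise and λ ∈ ℝ^ℓ with λ ≥ 0 componentwise such that Σᵢ τ_i ∇(f_i/g_i)(x*) + Σⱼ λ_j ∇h_j(x*) = 0 and Σⱼ λ_j h_j(x*) = 0. If for all feasible x, Σᵢ τ_i · s_i(x,x*)/u_i(x,x*) ≥ 0 (with u_i, s_i as in the fractional increment identity), then x* is a Pareto optimal solution of (VQFP): there is no feasible x with f_i(x)/g_i(x) ≤ f_i(x*)/g_i(x*) for all i and strict inequality for some i. -/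
open Matrix

lemma dot_symm' {n : ℕ} (M : Matrix (Fin n) (Fin n) ℝ) (hM : M.IsSymm) (x y : Fin n → ℝ) :
    x ⬝ᵥ M *ᵥ y = y ⬝ᵥ M *ᵥ x := by
  rw [Matrix.dotProduct_mulVec, ← Matrix.mulVec_transpose, hM.eq, dotProduct_comm]

lemma quad_expand' {n : ℕ} (M : Matrix (Fin n) (Fin n) ℝ) (hM : M.IsSymm)
    (c : Fin n → ℝ) (cb : ℝ) (x xs : Fin n → ℝ) :
    x ⬝ᵥ M *ᵥ x + c ⬝ᵥ x + cb =
      (xs ⬝ᵥ M *ᵥ xs + c ⬝ᵥ xs + cb) + ((2:ℝ) • (M *ᵥ xs) + c) ⬝ᵥ (x - xs)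
        + (x - xs) ⬝ᵥ (M *ᵥ (x - xs)) := by
  have h1 : xs ⬝ᵥ M *ᵥ x = x ⬝ᵥ M *ᵥ xs := dot_symm' M hM xs x
  have hmv : ∀ w, (M *ᵥ xs) ⬝ᵥ w = xs ᵥ* M ⬝ᵥ w := fun w => by
    rw [dotProduct_comm, dot_symm' M hM w xs, Matrix.dotProduct_mulVec]
  simp only [Matrix.mulVec_sub, dotProduct_sub, sub_dotProduct,
    add_dotProduct, smul_dotProduct, smul_eq_mul, Matrix.dotProduct_mulVec,
    Matrix.sub_vecMul, hmv] at *
  linarith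

lemma scalar_id' (fxs gxs p r qA qB : ℝ) (hgxs : gxs ≠ 0) (hgx : gxs + r + qB ≠ 0) :
    ((fxs + p + qA)/(gxs + r + qB) - fxs/gxs) * ((gxs + r + qB)/gxs) =
      (gxs^2)⁻¹ * (gxs * p - fxs * r) + (qA - fxs/gxs * qB)/gxs := by
  field_simp
  ring

lemma sum_dot' {ι : Type*} {n : ℕ} (s : Finset ι) (v : ι → Fin n → ℝ) (d : Fin n → ℝ) :
    (∑ i ∈ s, v i) ⬝ᵥ d = ∑ i ∈ s, v i ⬝ᵥ d := by
  simp only [dotProduct, Finset.sum_apply, Finset.sum_mul]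
  exact Finset.sum_comm

lemma div_id' (q gx gxs : ℝ) (h1 : gx ≠ 0) (h2 : gxs ≠ 0) : 1/gx*q/(gxs/gx) = q/gxs := by
  field_simp

theorem stmt_3 {n m ℓ : ℕ}
    (A B : Fin m → Matrix (Fin n) (Fin n) ℝ)
    (a b : Fin m → Fin n → ℝ) (abar bbar : Fin m → ℝ)
    (hA : ∀ i, (A i).IsSymm) (hB : ∀ i, (B i).PosSemidef)
    (f g : Fin m → (Fin n → ℝ) → ℝ)
    (hf : ∀ i x, f i x = x ⬝ᵥ (A i *ᵥ x) + a i ⬝ᵥ x + abar i)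
    (hg : ∀ i x, g i x = x ⬝ᵥ (B i *ᵥ x) + b i ⬝ᵥ x + bbar i)
    (hgpos : ∀ i x, 0 < g i x)
    (h : Fin ℓ → (Fin n → ℝ) → ℝ) (hgrad : Fin ℓ → (Fin n → ℝ) → (Fin n → ℝ))
    (hconv : ∀ j x y, h j x - h j y ≥ (hgrad j y) ⬝ᵥ (x - y))
    (S : Set (Fin n → ℝ)) (hS : S = {x | ∀ j, h j x ≤ 0})
    (xs : Fin n → ℝ) (hxs : xs ∈ S)
    (τ : Fin m → ℝ) (lam : Fin ℓ → ℝ)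
    (hτ : ∀ i, 0 < τ i) (hlam : ∀ j, 0 ≤ lam j)
    (hstat : ∑ i, τ i •
        (((g i xs) ^ 2)⁻¹ •
          ((g i xs) • ((2 : ℝ) • (A i *ᵥ xs) + a i) - (f i xs) • ((2 : ℝ) • (B i *ᵥ xs) + b i)))
        + ∑ j, lam j • hgrad j xs = 0)
    (hcomp : ∑ j, lam j * h j xs = 0)
    (hkey : ∀ x ∈ S, 0 ≤ ∑ i, τ i *
        (((1 / g i x) * ((x - xs) ⬝ᵥ ((A i - (f i xs / g i xs) • B i) *ᵥ (x - xs))))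
          / (g i xs / g i x))) :
    ¬ ∃ x ∈ S, (∀ i, f i x / g i x ≤ f i xs / g i xs) ∧
        (∃ i, f i x / g i x < f i xs / g i xs) := by
  rintro ⟨x, hxS, hle, i0, hlt⟩
  have hBsymm : ∀ i, (B i).IsSymm := by
    intro i
    have := (hB i).1
    rwa [Matrix.IsHermitian, conjTranspose_eq_transpose_of_trivial] at this
  have hgx : ∀ i, (0:ℝ) < g i x := fun i => hgpos i x
  have hgxs : ∀ i, (0:ℝ) < g i xs := fun i => hgpos i xs
  set d : Fin n → ℝ := x - xs with hd
  set G : Fin m → Fin n → ℝ := fun i => ((g i xs)^2)⁻¹ •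
      ((g i xs) • ((2:ℝ) • (A i *ᵥ xs) + a i) - (f i xs) • ((2:ℝ) • (B i *ᵥ xs) + b i)) with hG
  set Q : Fin m → ℝ := fun i => d ⬝ᵥ ((A i - (f i xs / g i xs) • B i) *ᵥ d) with hQ
  -- per-i key identity
  have key : ∀ i, (f i x / g i x - f i xs / g i xs) * (g i x / g i xs)
      = G i ⬝ᵥ d + Q i / g i xs := by
    intro i
    have hfA : f i x = f i xs + ((2:ℝ) • (A i *ᵥ xs) + a i) ⬝ᵥ d + d ⬝ᵥ (A i *ᵥ d) := by
      rw [hf i x, hf i xs]; exact quad_expand' (A i) (hA i) (a i) (abar i) x xs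
    have hgB : g i x = g i xs + ((2:ℝ) • (B i *ᵥ xs) + b i) ⬝ᵥ d + d ⬝ᵥ (B i *ᵥ d) := by
      rw [hg i x, hg i xs]; exact quad_expand' (B i) (hBsymm i) (b i) (bbar i) x xs
    have hGd : G i ⬝ᵥ d = ((g i xs)^2)⁻¹ *
        ((g i xs) * (((2:ℝ) • (A i *ᵥ xs) + a i) ⬝ᵥ d)
          - (f i xs) * (((2:ℝ) • (B i *ᵥ xs) + b i) ⬝ᵥ d)) := by
      simp [hG, smul_dotProduct, sub_dotProduct, mul_sub]
      ring
    have hQd : Q i = d ⬝ᵥ (A i *ᵥ d) - (f i xs / g i xs) * (d ⬝ᵥ (B i *ᵥ d)) := by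
      simp [hQ, Matrix.sub_mulVec, Matrix.smul_mulVec, dotProduct_sub,
        dotProduct_smul]
    rw [hGd, hQd, hfA, hgB]
    exact scalar_id' _ _ _ _ _ _ (ne_of_gt (hgxs i)) (by rw [← hgB]; exact ne_of_gt (hgx i))
  -- sum identity
  have sum_eq : ∑ i, τ i * ((f i x / g i x - f i xs / g i xs) * (g i x / g i xs))
      = (∑ i, τ i • G i) ⬝ᵥ d + ∑ i, τ i * (Q i / g i xs) := by
    rw [sum_dot', ← Finset.sum_add_distrib]
    refine Finset.sum_congr rfl fun i _ => ?_
    rw [key i, mul_add]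
    congr 1
    exact ((smul_dotProduct (τ i) (G i) d).trans (smul_eq_mul ..)).symm
  -- stationarity
  have hstat' : ∑ i, τ i • G i = - ∑ j, lam j • hgrad j xs :=
    eq_neg_of_add_eq_zero_left hstat
  have hxS' : ∀ j, h j x ≤ 0 := by rw [hS] at hxS; exact hxS
  have hgrad_bound : (∑ i, τ i • G i) ⬝ᵥ d ≥ 0 := by
    rw [hstat', neg_dotProduct, sum_dot']
    have h1 : ∑ j, (lam j • hgrad j xs) ⬝ᵥ d ≤ ∑ j, lam j * h j x := by
      calc ∑ j, (lam j • hgrad j xs) ⬝ᵥ d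
          ≤ ∑ j, lam j * (h j x - h j xs) := by
            refine Finset.sum_le_sum fun j _ => ?_
            rw [smul_dotProduct, smul_eq_mul]
            exact mul_le_mul_of_nonneg_left (hconv j x xs) (hlam j)
        _ = ∑ j, lam j * h j x - ∑ j, lam j * h j xs := by
            rw [← Finset.sum_sub_distrib]; exact Finset.sum_congr rfl fun j _ => by ring
        _ = ∑ j, lam j * h j x := by rw [hcomp, sub_zero]
    have h2 : ∑ j, lam j * h j x ≤ 0 :=
      Finset.sum_nonpos fun j _ => mul_nonpos_of_nonneg_of_nonpos (hlam j) (hxS' j)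
    linarith
  -- hkey rewritten
  have hkey' : 0 ≤ ∑ i, τ i * (Q i / g i xs) := by
    have h0 := hkey x hxS
    calc (0:ℝ) ≤ _ := h0
      _ = ∑ i, τ i * (Q i / g i xs) := by
        refine Finset.sum_congr rfl fun i _ => ?_
        rw [hQ]
        congr 1
        exact div_id' _ _ _ (ne_of_gt (hgx i)) (ne_of_gt (hgxs i))
  -- the sum is negative
  have hsum_lt : ∑ i, τ i * ((f i x / g i x - f i xs / g i xs) * (g i x / g i xs)) < 0 := by
    have := Finset.sum_lt_sum
      (f := fun i => τ i * ((f i x / g i x - f i xs / g i xs) * (g i x / g i xs)))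
      (g := fun _ => (0:ℝ))
      (fun i _ => mul_nonpos_of_nonneg_of_nonpos (le_of_lt (hτ i))
        (mul_nonpos_of_nonpos_of_nonneg (sub_nonpos.2 (hle i))
          (le_of_lt (div_pos (hgx i) (hgxs i)))))
      ⟨i0, Finset.mem_univ i0, mul_neg_of_pos_of_neg (hτ i0)
        (mul_neg_of_neg_of_pos (sub_neg.2 hlt) (div_pos (hgx i0) (hgxs i0)))⟩
    simpa using this
  rw [sum_eq] at hsum_lt
  linarith
end

section
/- Under the KKT-type conditions at a feasible x* (existence of τ > 0 and λ ≥ 0 with Σᵢ τ_i ∇(f_i/g_i)(x*) + Σⱼ λ_j ∇h_j(x*) = 0 and Σⱼ λ_j h_j(x*) = 0, h_j convex), if for every i the matrix A_i - (f_i(x*)/g_i(x*))B_i is positive semidefinite, then x* is Pareto optimal for the vector quadratic fractional problem. -/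
open Matrix

lemma sum_dp {ι : Type*} {n : ℕ} (s : Finset ι) (F : ι → Fin n → ℝ) (v : Fin n → ℝ) :
    (∑ i ∈ s, F i) ⬝ᵥ v = ∑ i ∈ s, F i ⬝ᵥ v := by
  simp only [dotProduct, Finset.sum_apply, Finset.sum_mul]
  exact Finset.sum_comm

lemma quad_conv {n : ℕ} (M : Matrix (Fin n) (Fin n) ℝ) (hM : M.IsSymm) (x y : Fin n → ℝ) :
    x ⬝ᵥ (M *ᵥ x) - y ⬝ᵥ (M *ᵥ y) - ((2:ℝ) • (M *ᵥ y)) ⬝ᵥ (x - y) = (x - y) ⬝ᵥ (M *ᵥ (x - y)) := by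
  have hsym : ∀ u v : Fin n → ℝ, u ⬝ᵥ (M *ᵥ v) = v ⬝ᵥ (M *ᵥ u) := by
    intro u v
    rw [dotProduct_mulVec, ← Matrix.mulVec_transpose, hM.eq, dotProduct_comm]
  simp only [Matrix.mulVec_sub, dotProduct_sub, sub_dotProduct, smul_dotProduct,
    smul_eq_mul]
  rw [dotProduct_comm (M *ᵥ y) x, dotProduct_comm (M *ᵥ y) y, hsym x y]
  ring

theorem stmt_4 {n m ℓ : ℕ}
    (A B : Fin m → Matrix (Fin n) (Fin n) ℝ)
    (a b : Fin m → Fin n → ℝ) (abar bbar : Fin m → ℝ)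
    (hA : ∀ i, (A i).IsSymm) (hB : ∀ i, (B i).PosSemidef)
    (f g : Fin m → (Fin n → ℝ) → ℝ)
    (hf : ∀ i x, f i x = x ⬝ᵥ (A i *ᵥ x) + a i ⬝ᵥ x + abar i)
    (hg : ∀ i x, g i x = x ⬝ᵥ (B i *ᵥ x) + b i ⬝ᵥ x + bbar i)
    (hgpos : ∀ i x, 0 < g i x)
    (h : Fin ℓ → (Fin n → ℝ) → ℝ) (hgrad : Fin ℓ → (Fin n → ℝ) → (Fin n → ℝ))
    (hconv : ∀ j x y, h j x - h j y ≥ (hgrad j y) ⬝ᵥ (x - y))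
    (S : Set (Fin n → ℝ)) (hS : S = {x | ∀ j, h j x ≤ 0})
    (xs : Fin n → ℝ) (hxs : xs ∈ S)
    (τ : Fin m → ℝ) (lam : Fin ℓ → ℝ)
    (hτ : ∀ i, 0 < τ i) (hlam : ∀ j, 0 ≤ lam j)
    (hstat : ∑ i, τ i •
        (((g i xs) ^ 2)⁻¹ •
          ((g i xs) • ((2 : ℝ) • (A i *ᵥ xs) + a i) - (f i xs) • ((2 : ℝ) • (B i *ᵥ xs) + b i)))
        + ∑ j, lam j • hgrad j xs = 0)
    (hcomp : ∑ j, lam j * h j xs = 0)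
    (hpsd : ∀ i, ∀ v : Fin n → ℝ, 0 ≤ v ⬝ᵥ ((A i - (f i xs / g i xs) • B i) *ᵥ v)) :
    ¬ ∃ x ∈ S, (∀ i, f i x / g i x ≤ f i xs / g i xs) ∧
        (∃ i, f i x / g i x < f i xs / g i xs) := by
  rintro ⟨x, hxS, hle, i0, hlt⟩
  -- dot the stationarity equation with x - xs
  have E := congrArg (fun v => v ⬝ᵥ (x - xs)) hstat
  simp only [sum_dp, add_dotProduct, smul_dotProduct, sub_dotProduct,
    zero_dotProduct, smul_eq_mul] at E
  -- notation
  set d : Fin n → ℝ := x - xs with hd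
  -- per-index bound for the objective part
  have keybound : ∀ i,
      (2 * (A i *ᵥ xs ⬝ᵥ d) + a i ⬝ᵥ d) -
        (f i xs / g i xs) * (2 * (B i *ᵥ xs ⬝ᵥ d) + b i ⬝ᵥ d)
      ≤ f i x - (f i xs / g i xs) * g i x := by
    intro i
    set φ : ℝ := f i xs / g i xs with hφ
    set M : Matrix (Fin n) (Fin n) ℝ := A i - φ • B i with hM
    set c : Fin n → ℝ := a i - φ • b i with hc
    have hBsym : (B i).IsSymm := by
      have hH := (hB i).1
      simpa [Matrix.IsHermitian, Matrix.IsSymm] using hH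
    have hMsym : M.IsSymm := by
      rw [Matrix.IsSymm, hM, Matrix.transpose_sub, Matrix.transpose_smul, (hA i).eq, hBsym.eq]
    have expand : ∀ v, f i v - φ * g i v = v ⬝ᵥ (M *ᵥ v) + c ⬝ᵥ v + (abar i - φ * bbar i) := by
      intro v
      rw [hf, hg, hM, hc]
      simp only [Matrix.sub_mulVec, Matrix.smul_mulVec, dotProduct_sub,
        dotProduct_smul, sub_dotProduct, smul_dotProduct, smul_eq_mul]
      ring
    have grad_eq : (2 * (A i *ᵥ xs ⬝ᵥ d) + a i ⬝ᵥ d) -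
        φ * (2 * (B i *ᵥ xs ⬝ᵥ d) + b i ⬝ᵥ d)
        = ((2:ℝ) • (M *ᵥ xs) + c) ⬝ᵥ d := by
      rw [hM, hc]
      simp only [Matrix.sub_mulVec, Matrix.smul_mulVec, add_dotProduct,
        sub_dotProduct, smul_dotProduct, smul_eq_mul]
      ring
    have hgne : g i xs ≠ 0 := ne_of_gt (hgpos i xs)
    have Fxs0 : f i xs - φ * g i xs = 0 := by
      rw [hφ]; field_simp
      ring
    have conv : ((2:ℝ) • (M *ᵥ xs) + c) ⬝ᵥ d ≤
        (f i x - φ * g i x) - (f i xs - φ * g i xs) := by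
      rw [expand x, expand xs]
      have hq := quad_conv M hMsym x xs
      have hp := hpsd i (x - xs)
      rw [← hφ, ← hM] at hp
      rw [add_dotProduct, hd, dotProduct_sub c x xs]
      linarith
    rw [grad_eq]
    linarith [conv, Fxs0]
  -- the objective sum is negative
  have hgi : ∀ i, (0:ℝ) < (g i xs)⁻¹ := fun i => inv_pos.2 (hgpos i xs)
  have simpl : ∀ i, ((g i xs) ^ 2)⁻¹ *
      ((g i xs) * (2 * (A i *ᵥ xs ⬝ᵥ d) + a i ⬝ᵥ d) -
        (f i xs) * (2 * (B i *ᵥ xs ⬝ᵥ d) + b i ⬝ᵥ d))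
      = (g i xs)⁻¹ * ((2 * (A i *ᵥ xs ⬝ᵥ d) + a i ⬝ᵥ d) -
          (f i xs / g i xs) * (2 * (B i *ᵥ xs ⬝ᵥ d) + b i ⬝ᵥ d)) := by
    intro i
    have hgne : g i xs ≠ 0 := ne_of_gt (hgpos i xs)
    field_simp
  have hFle : ∀ i, f i x - (f i xs / g i xs) * g i x ≤ 0 := by
    intro i
    have := (div_le_iff₀ (hgpos i x)).1 (hle i)
    linarith
  have hFlt : f i0 x - (f i0 xs / g i0 xs) * g i0 x < 0 := by
    have := (div_lt_iff₀ (hgpos i0 x)).1 hlt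
    linarith
  have term_le : ∀ i, τ i * (((g i xs) ^ 2)⁻¹ *
      ((g i xs) * (2 * (A i *ᵥ xs ⬝ᵥ d) + a i ⬝ᵥ d) -
        (f i xs) * (2 * (B i *ᵥ xs ⬝ᵥ d) + b i ⬝ᵥ d))) ≤ 0 := by
    intro i
    rw [simpl i]
    have h1 : (2 * (A i *ᵥ xs ⬝ᵥ d) + a i ⬝ᵥ d) -
        (f i xs / g i xs) * (2 * (B i *ᵥ xs ⬝ᵥ d) + b i ⬝ᵥ d) ≤ 0 :=
      le_trans (keybound i) (hFle i)
    have := mul_nonpos_of_nonneg_of_nonpos (le_of_lt (hgi i)) h1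
    exact mul_nonpos_of_nonneg_of_nonpos (le_of_lt (hτ i)) this
  have term_lt : τ i0 * (((g i0 xs) ^ 2)⁻¹ *
      ((g i0 xs) * (2 * (A i0 *ᵥ xs ⬝ᵥ d) + a i0 ⬝ᵥ d) -
        (f i0 xs) * (2 * (B i0 *ᵥ xs ⬝ᵥ d) + b i0 ⬝ᵥ d))) < 0 := by
    rw [simpl i0]
    have h1 : (2 * (A i0 *ᵥ xs ⬝ᵥ d) + a i0 ⬝ᵥ d) -
        (f i0 xs / g i0 xs) * (2 * (B i0 *ᵥ xs ⬝ᵥ d) + b i0 ⬝ᵥ d) < 0 :=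
      lt_of_le_of_lt (keybound i0) hFlt
    exact mul_neg_of_pos_of_neg (hτ i0) (mul_neg_of_pos_of_neg (hgi i0) h1)
  have sum1_neg : ∑ i, τ i * (((g i xs) ^ 2)⁻¹ *
      ((g i xs) * (2 * (A i *ᵥ xs ⬝ᵥ d) + a i ⬝ᵥ d) -
        (f i xs) * (2 * (B i *ᵥ xs ⬝ᵥ d) + b i ⬝ᵥ d))) < 0 := by
    have := Finset.sum_lt_sum (s := Finset.univ)
      (f := fun i => τ i * (((g i xs) ^ 2)⁻¹ *
        ((g i xs) * (2 * (A i *ᵥ xs ⬝ᵥ d) + a i ⬝ᵥ d) -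
          (f i xs) * (2 * (B i *ᵥ xs ⬝ᵥ d) + b i ⬝ᵥ d))))
      (g := fun _ => (0:ℝ))
      (fun i _ => term_le i) ⟨i0, Finset.mem_univ i0, term_lt⟩
    simpa using this
  -- the constraint sum is nonpositive
  have sum2_le : ∑ j, lam j * (hgrad j xs ⬝ᵥ d) ≤ 0 := by
    have step1 : ∑ j, lam j * (hgrad j xs ⬝ᵥ d) ≤ ∑ j, lam j * (h j x - h j xs) :=
      Finset.sum_le_sum fun j _ =>
        mul_le_mul_of_nonneg_left (hconv j x xs) (hlam j)
    have step2 : ∑ j, lam j * (h j x - h j xs) = ∑ j, lam j * h j x := by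
      simp only [mul_sub, Finset.sum_sub_distrib, hcomp, sub_zero]
    have hhx : ∀ j, h j x ≤ 0 := by
      rw [hS] at hxS; exact hxS
    have step3 : ∑ j, lam j * h j x ≤ 0 :=
      Finset.sum_nonpos fun j _ => mul_nonpos_of_nonneg_of_nonpos (hlam j) (hhx j)
    linarith
  linarith [E, sum1_neg, sum2_le]
end

section
/- A feasible point x* is Pareto optimal for the vector quadratic fractional problem (VQFP) if and only if x* is Pareto optimal for the associated parametric problem (VQFP)_{x*} whose i-th objective is x ↦ f_i(x) - (f_i(x*)/g_i(x*))·g_i(x), over the same feasible set. -/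
/-- Pareto optimality of `xs` for vector objective `F` over feasible set `S`:
no feasible `x` with `F x ≤ F xs` componentwise and `F x ≠ F xs`. -/
def ParetoOpt {α : Type*} {m : ℕ} (S : Set α) (F : α → Fin m → ℝ) (xs : α) : Prop :=
  ¬ ∃ x ∈ S, (∀ i, F x i ≤ F xs i) ∧ F x ≠ F xs

theorem stmt_10 {α : Type*} {m : ℕ} (S : Set α)
    (f g : Fin m → α → ℝ) (hgpos : ∀ i, ∀ x ∈ S, 0 < g i x)
    (xs : α) (hxs : xs ∈ S) :
    ParetoOpt S (fun x i => f i x / g i x) xs ↔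
      ParetoOpt S (fun x i => f i x - (f i xs / g i xs) * g i x) xs := by
  have keyle : ∀ x ∈ S, ∀ i, (f i x / g i x ≤ f i xs / g i xs ↔
      f i x - (f i xs / g i xs) * g i x ≤ f i xs - (f i xs / g i xs) * g i xs) := by
    intro x hx i
    have hgx := hgpos i x hx
    have hgxs := hgpos i xs hxs
    have hl : f i xs / g i xs * g i xs = f i xs := div_mul_cancel₀ _ hgxs.ne'
    rw [div_le_div_iff₀ hgx hgxs]
    constructor <;> intro h <;> nlinarith [hl, mul_pos hgx hgxs]
  have keyeq : ∀ x ∈ S, ∀ i, (f i x / g i x = f i xs / g i xs ↔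
      f i x - (f i xs / g i xs) * g i x = f i xs - (f i xs / g i xs) * g i xs) := by
    intro x hx i
    have hgx := hgpos i x hx
    have hgxs := hgpos i xs hxs
    have hl : f i xs / g i xs * g i xs = f i xs := div_mul_cancel₀ _ hgxs.ne'
    rw [div_eq_div_iff hgx.ne' hgxs.ne']
    constructor <;> intro h <;> nlinarith [hl, mul_pos hgx hgxs]
  unfold ParetoOpt
  constructor <;> intro h hc <;> apply h <;>
    obtain ⟨x, hx, hle, hne⟩ := hc <;> refine ⟨x, hx, ?_, ?_⟩
  · intro i; exact (keyle x hx i).mpr (hle i)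
  · intro heq; apply hne; funext i
    exact (keyeq x hx i).mp (congrFun heq i)
  · intro i; exact (keyle x hx i).mp (hle i)
  · intro heq; apply hne; funext i
    exact (keyeq x hx i).mpr (congrFun heq i)
end

section
/- Let x* be feasible and w ∈ ℝᵐ with w > 0 componentwise. If x* minimizes the weighted scalar function x ↦ Σᵢ w_i (f_i(x) - (f_i(x*)/g_i(x*))g_i(x)) over the feasible set S, then x* is Pareto optimal for the vector fractional problem with objectives f_i/g_i over S. -/
theorem stmt_11 {α : Type*} {m : ℕ} (S : Set α)
    (f g : Fin m → α → ℝ) (hgpos : ∀ i, ∀ x ∈ S, 0 < g i x)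
    (xs : α) (hxs : xs ∈ S)
    (w : Fin m → ℝ) (hw : ∀ i, 0 < w i)
    (hmin : ∀ x ∈ S,
      ∑ i, w i * (f i xs - (f i xs / g i xs) * g i xs)
        ≤ ∑ i, w i * (f i x - (f i xs / g i xs) * g i x)) :
    ¬ ∃ x ∈ S, (∀ i, f i x / g i x ≤ f i xs / g i xs) ∧
        (∃ i, f i x / g i x < f i xs / g i xs) := by
  rintro ⟨x, hxS, hle, j, hj⟩
  have hgs : ∀ i, 0 < g i xs := fun i => hgpos i xs hxs
  have hgx : ∀ i, 0 < g i x := fun i => hgpos i x hxS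
  have h0 : ∑ i, w i * (f i xs - (f i xs / g i xs) * g i xs) = 0 := by
    apply Finset.sum_eq_zero
    intro i _
    rw [div_mul_cancel₀ _ (hgs i).ne']
    ring
  have hlt : ∑ i, w i * (f i x - (f i xs / g i xs) * g i x) < 0 := by
    refine lt_of_lt_of_eq (Finset.sum_lt_sum (g := fun _ => (0:ℝ)) ?_ ?_) (by simp)
    · intro i _
      have : f i x / g i x ≤ f i xs / g i xs := hle i
      have h2 : f i x ≤ (f i xs / g i xs) * g i x := by
        rw [div_le_div_iff₀ (hgx i) (hgs i)] at this
        rw [div_mul_eq_mul_div, le_div_iff₀ (hgs i)]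
        linarith
      nlinarith [hw i]
    · refine ⟨j, Finset.mem_univ j, ?_⟩
      have h2 : f j x < (f j xs / g j xs) * g j x := by
        rw [div_lt_div_iff₀ (hgx j) (hgs j)] at hj
        rw [div_mul_eq_mul_div, lt_div_iff₀ (hgs j)]
        linarith
      nlinarith [hw j]
  have := hmin x hxS
  rw [h0] at this
  linarith
end

section
/- (Weak duality) Let x be feasible for (VQFP) (h_j(x) ≤ 0 for all j, h_j convex differentiable) and let (u, τ, λ) satisfy: u feasible region point with Σᵢ τ_i (∇f_i(u) - (f_i(u)/g_i(u))∇g_i(u)) + Σⱼ λ_j ∇h_j(u) = 0, Σⱼ λ_j h_j(u) ≥ 0, τ > 0, λ ≥ 0. If Σᵢ τ_i [A_i - (f_i(u)/g_i(u))B_i] is positive semidefinite, then it is not the case that f_i(x)/g_i(x) ≤ f_i(u)/g_i(u) for all i with strict inequality for some i. -/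
open Matrix

lemma dp_sum_left {ι n : Type*} [Fintype n] (s : Finset ι) (v : ι → n → ℝ) (w : n → ℝ) :
    (∑ i ∈ s, v i) ⬝ᵥ w = ∑ i ∈ s, v i ⬝ᵥ w := by
  simp only [dotProduct, Finset.sum_apply, Finset.sum_mul]
  exact Finset.sum_comm

lemma dp_sum_right {ι n : Type*} [Fintype n] (s : Finset ι) (v : ι → n → ℝ) (w : n → ℝ) :
    w ⬝ᵥ (∑ i ∈ s, v i) = ∑ i ∈ s, w ⬝ᵥ v i := by
  simp only [dotProduct, Finset.sum_apply, Finset.mul_sum]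
  exact Finset.sum_comm

lemma sum_mulVec' {ι k : Type*} [Fintype k] (s : Finset ι) (M : ι → Matrix k k ℝ) (v : k → ℝ) :
    (∑ i ∈ s, M i) *ᵥ v = ∑ i ∈ s, M i *ᵥ v := by
  funext j
  simp only [mulVec, dotProduct, Finset.sum_apply, Matrix.sum_apply, Finset.sum_mul]
  exact Finset.sum_comm

lemma quad_conv_aux {n : ℕ} (M : Matrix (Fin n) (Fin n) ℝ) (hM : M.IsSymm) (c : Fin n → ℝ)
    (x u : Fin n → ℝ) :
    (x ⬝ᵥ (M *ᵥ x) + c ⬝ᵥ x) - (u ⬝ᵥ (M *ᵥ u) + c ⬝ᵥ u)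
    = ((2:ℝ) • (M *ᵥ u) + c) ⬝ᵥ (x - u) + (x - u) ⬝ᵥ (M *ᵥ (x - u)) := by
  have hs : x ⬝ᵥ (M *ᵥ u) = u ⬝ᵥ (M *ᵥ x) := by
    rw [dotProduct_mulVec, ← mulVec_transpose, hM, dotProduct_comm]
  simp only [mulVec_sub, dotProduct_sub, sub_dotProduct, add_dotProduct,
    dotProduct_add, smul_dotProduct, smul_eq_mul]
  linarith [dotProduct_comm (M *ᵥ u) x, dotProduct_comm (M *ᵥ u) u]

theorem stmt_15 {n m ℓ : ℕ}
    (A B : Fin m → Matrix (Fin n) (Fin n) ℝ)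
    (a b : Fin m → Fin n → ℝ) (abar bbar : Fin m → ℝ)
    (hA : ∀ i, (A i).IsSymm) (hB : ∀ i, (B i).PosSemidef)
    (f g : Fin m → (Fin n → ℝ) → ℝ)
    (hf : ∀ i x, f i x = x ⬝ᵥ (A i *ᵥ x) + a i ⬝ᵥ x + abar i)
    (hg : ∀ i x, g i x = x ⬝ᵥ (B i *ᵥ x) + b i ⬝ᵥ x + bbar i)
    (hgpos : ∀ i x, 0 < g i x)
    (h : Fin ℓ → (Fin n → ℝ) → ℝ) (hgrad : Fin ℓ → (Fin n → ℝ) → (Fin n → ℝ))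
    (hconv : ∀ j x y, h j x - h j y ≥ (hgrad j y) ⬝ᵥ (x - y))
    (x : Fin n → ℝ) (hx : ∀ j, h j x ≤ 0)
    (u : Fin n → ℝ) (hu : ∀ j, h j u ≤ 0)
    (τ : Fin m → ℝ) (lam : Fin ℓ → ℝ)
    (hτ : ∀ i, 0 < τ i) (hlam : ∀ j, 0 ≤ lam j)
    (hstat : ∑ i, τ i •
        (((2 : ℝ) • (A i *ᵥ u) + a i) - (f i u / g i u) • ((2 : ℝ) • (B i *ᵥ u) + b i))
        + ∑ j, lam j • hgrad j u = 0)
    (hcomp : 0 ≤ ∑ j, lam j * h j u)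
    (hpsd : ∀ v : Fin n → ℝ,
      0 ≤ v ⬝ᵥ ((∑ i, τ i • (A i - (f i u / g i u) • B i)) *ᵥ v)) :
    ¬ ((∀ i, f i x / g i x ≤ f i u / g i u) ∧
        (∃ i, f i x / g i x < f i u / g i u)) := by
  rintro ⟨hle, i0, hlt⟩
  set ρ : Fin m → ℝ := fun i => f i u / g i u with hρ
  set w : Fin n → ℝ := x - u with hw
  -- symmetry of A i - ρ i • B i
  have hMsymm : ∀ i, (A i - ρ i • B i).IsSymm := by
    intro i
    have hBs : (B i).IsSymm := by
      have := (hB i).1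
      simpa [Matrix.IsHermitian, Matrix.IsSymm] using this
    simp [Matrix.IsSymm, transpose_sub, transpose_smul, (hA i).eq, hBs.eq]
  -- rewrite f - ρ g as a quadratic
  have hquad : ∀ (i : Fin m) (v : Fin n → ℝ),
      f i v - ρ i * g i v
        = v ⬝ᵥ ((A i - ρ i • B i) *ᵥ v) + (a i - ρ i • b i) ⬝ᵥ v + (abar i - ρ i * bbar i) := by
    intro i v
    rw [hf, hg]
    simp only [sub_mulVec, smul_mulVec, dotProduct_sub, dotProduct_smul,
      sub_dotProduct, smul_dotProduct, smul_eq_mul]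
    ring
  -- gradient rewriting
  have hgradeq : ∀ i : Fin m,
      ((2 : ℝ) • (A i *ᵥ u) + a i) - ρ i • ((2 : ℝ) • (B i *ᵥ u) + b i)
        = (2:ℝ) • ((A i - ρ i • B i) *ᵥ u) + (a i - ρ i • b i) := by
    intro i
    simp only [sub_mulVec, smul_mulVec, smul_sub, smul_add]
    module
  -- per-i key inequality
  have key : ∀ i : Fin m,
      f i x - ρ i * g i x - (f i u - ρ i * g i u)
        = (((2 : ℝ) • (A i *ᵥ u) + a i) - ρ i • ((2 : ℝ) • (B i *ᵥ u) + b i)) ⬝ᵥ w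
          + w ⬝ᵥ ((A i - ρ i • B i) *ᵥ w) := by
    intro i
    rw [hquad, hquad, hgradeq, hw]
    have := quad_conv_aux (A i - ρ i • B i) (hMsymm i) (a i - ρ i • b i) x u
    linarith
  have hzero : ∀ i : Fin m, f i u - ρ i * g i u = 0 := by
    intro i
    have hgne : g i u ≠ 0 := ne_of_gt (hgpos i u)
    simp only [hρ]
    rw [div_mul_cancel₀ _ hgne, sub_self]
  -- sum identity
  have hsum : ∑ i, τ i * (f i x - ρ i * g i x)
      = (∑ i, τ i • (((2 : ℝ) • (A i *ᵥ u) + a i) - ρ i • ((2 : ℝ) • (B i *ᵥ u) + b i))) ⬝ᵥ w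
        + w ⬝ᵥ ((∑ i, τ i • (A i - ρ i • B i)) *ᵥ w) := by
    rw [dp_sum_left]
    rw [sum_mulVec', dp_sum_right, ← Finset.sum_add_distrib]
    apply Finset.sum_congr rfl
    intro i _
    rw [smul_dotProduct, smul_mulVec, dotProduct_smul, smul_eq_mul, smul_eq_mul,
      ← mul_add]
    have e := key i
    rw [hzero i, sub_zero] at e
    rw [e]
  -- LHS is negative
  have hneg : ∑ i, τ i * (f i x - ρ i * g i x) < 0 := by
    have : ∑ i, τ i * (f i x - ρ i * g i x) < ∑ _i : Fin m, (0:ℝ) := by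
      apply Finset.sum_lt_sum
      · intro i _
        have h1 : f i x - ρ i * g i x ≤ 0 := by
          have := hle i
          have hgx := hgpos i x
          rw [div_le_iff₀ hgx] at this
          linarith
        nlinarith [(hτ i).le]
      · refine ⟨i0, Finset.mem_univ _, ?_⟩
        have h1 : f i0 x - ρ i0 * g i0 x < 0 := by
          have hgx := hgpos i0 x
          rw [div_lt_iff₀ hgx] at hlt
          linarith
        nlinarith [hτ i0]
    simpa using this
  -- gradient term bound
  have hG : (∑ i, τ i • (((2 : ℝ) • (A i *ᵥ u) + a i) - ρ i • ((2 : ℝ) • (B i *ᵥ u) + b i))) ⬝ᵥ w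
      = - ∑ j, lam j * (hgrad j u ⬝ᵥ w) := by
    have h1 : (∑ i, τ i • (((2 : ℝ) • (A i *ᵥ u) + a i) - ρ i • ((2 : ℝ) • (B i *ᵥ u) + b i)))
        = - ∑ j, lam j • hgrad j u := by
      have := hstat
      simp only [show ∀ i, f i u / g i u = ρ i from fun i => rfl] at this
      linear_combination (norm := module) this
    rw [h1, neg_dotProduct, dp_sum_left]
    congr 1
    apply Finset.sum_congr rfl
    intro j _
    rw [smul_dotProduct, smul_eq_mul]
  have hGge : 0 ≤ (∑ i, τ i • (((2 : ℝ) • (A i *ᵥ u) + a i) - ρ i • ((2 : ℝ) • (B i *ᵥ u) + b i))) ⬝ᵥ w := by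
    rw [hG]
    have h2 : ∑ j, lam j * (hgrad j u ⬝ᵥ w) ≤ ∑ j, lam j * (h j x - h j u) := by
      apply Finset.sum_le_sum
      intro j _
      exact mul_le_mul_of_nonneg_left (hconv j x u) (hlam j)
    have h3 : ∑ j, lam j * (h j x - h j u) ≤ 0 := by
      have : ∑ j, lam j * (h j x - h j u) = ∑ j, lam j * h j x - ∑ j, lam j * h j u := by
        rw [← Finset.sum_sub_distrib]; apply Finset.sum_congr rfl; intros; ring
      rw [this]
      have h4 : ∑ j, lam j * h j x ≤ 0 :=
        Finset.sum_nonpos fun j _ => mul_nonpos_of_nonneg_of_nonpos (hlam j) (hx j)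
      linarith
    linarith
  have hpsd' := hpsd w
  simp only [show ∀ i, f i u / g i u = ρ i from fun i => rfl] at hpsd'
  linarith [hsum, hneg, hGge, hpsd']
end
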